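/- For all integers n, m ≥ 1, the domination polynomial of the n×m rook graph satisfies D_{R_{n,m}}(x) = ((1+x)^n − 1)^m + ((1+x)^m − 1)^n − (−1)^n Σ_{ℓ=0}^{n} (−1)^ℓ C(n,ℓ) ((1+x)^ℓ − 1)^m as an identity in the polynomial ring ℤ[x]. -/

import Mathlib

open Finset Polynomial

/-- The `n × m` rook graph: vertices are squares `(a,b)`; two distinct squares are
adjacent iff they share a row or a column. -/
def rookGraph (n m : ℕ) : SimpleGraph (Fin n × Fin m) where
  Adj v w := v ≠ w ∧ (v.1 = w.1 ∨ v.2 = w.2)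
  symm := by
    constructor
    rintro v w ⟨h1, h2⟩
    exact ⟨h1.symm, h2.imp Eq.symm Eq.symm⟩
  loopless := by
    constructor
    rintro v ⟨h1, _⟩
    exact h1 rfl

/-- `S` is a dominating set of the `n × m` rook graph. -/
def IsDomSet (n m : ℕ) (S : Finset (Fin n × Fin m)) : Prop :=
  ∀ v, v ∈ S ∨ ∃ u ∈ S, (rookGraph n m).Adj u v

/-- `domCount n m k` is the number of dominating sets of cardinality `k`
of the `n × m` rook graph. -/
noncomputable def domCount (n m k : ℕ) : ℕ :=
  Set.ncard {S : Finset (Fin n × Fin m) | S.card = k ∧ IsDomSet n m S}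

/-- `ECount n m k` is the number of `k`-element subsets of `{1,…,n} × {1,…,m}`
that meet every row and every column. -/
noncomputable def ECount (n m k : ℕ) : ℕ :=
  Set.ncard {T : Finset (Fin n × Fin m) | T.card = k ∧
    (∀ r : Fin n, ∃ c : Fin m, (r, c) ∈ T) ∧ (∀ c : Fin m, ∃ r : Fin n, (r, c) ∈ T)}

/-- The domination polynomial of the `n × m` rook graph, as a polynomial over `ℤ`. -/
noncomputable def domPoly (n m : ℕ) : Polynomial ℤ :=
  ∑ k ∈ Finset.range (n * m + 1), Polynomial.C (domCount n m k : ℤ) * Polynomial.X ^ k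

open scoped Classical

namespace RookAux2

variable {α β : Type*} [Fintype α] [Fintype β] [DecidableEq α] [DecidableEq β]

lemma myIte_congr {γ : Sort*} {p q : Prop} {i1 : Decidable p} {i2 : Decidable q} {a b : γ}
    (h : p ↔ q) : (@ite _ p i1 a b) = (@ite _ q i2 a b) := by
  have hpq : p = q := propext h
  subst hpq
  congr

lemma myIf_pos {γ : Sort*} {p : Prop} {i : Decidable p} (h : p) (a b : γ) :
    (@ite _ p i a b) = a := by
  match i with
  | isTrue _ => rfl
  | isFalse hf => exact absurd h hf

lemma myIf_neg {γ : Sort*} {p : Prop} {i : Decidable p} (h : ¬p) (a b : γ) :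
    (@ite _ p i a b) = b := by
  match i with
  | isTrue ht => exact absurd ht h
  | isFalse _ => rfl

noncomputable def rowOf (S : Finset (α × β)) (a : α) : Finset β :=
  (S.filter (fun p => p.1 = a)).image Prod.snd

lemma mem_rowOf {S : Finset (α × β)} {a : α} {b : β} : b ∈ rowOf S a ↔ (a, b) ∈ S := by
  simp only [rowOf, mem_image, mem_filter]
  constructor
  · rintro ⟨⟨x, y⟩, ⟨hS, rfl⟩, rfl⟩
    exact hS
  · intro h
    exact ⟨(a, b), ⟨h, rfl⟩, rfl⟩

lemma sum_card_rowOf (S : Finset (α × β)) : ∑ a, (rowOf S a).card = S.card := by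
  rw [Finset.card_eq_sum_card_fiberwise (f := Prod.fst) (t := univ) (fun x _ => mem_univ _)]
  refine Finset.sum_congr rfl fun a _ => ?_
  rw [rowOf, Finset.card_image_of_injOn]
  intro p hp q hq h
  simp only [mem_coe, mem_filter] at hp hq
  exact Prod.ext (hp.2.trans hq.2.symm) h

lemma rowOf_bijective : Function.Bijective (rowOf (α := α) (β := β)) := by
  constructor
  · intro S T h
    ext ⟨a, b⟩
    rw [← mem_rowOf (a := a) (b := b), ← mem_rowOf (a := a) (b := b), h]
  · intro f
    refine ⟨univ.filter (fun p => p.2 ∈ f p.1), ?_⟩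
    funext a
    ext b
    rw [mem_rowOf]
    simp

lemma sum_prod_rowOf (w : α → Finset β → Polynomial ℤ) :
    ∑ S : Finset (α × β), ∏ a, w a (rowOf S a) = ∏ a, ∑ T : Finset β, w a T := by
  rw [Finset.prod_univ_sum (t := fun _ : α => (univ : Finset (Finset β)))]
  rw [Fintype.piFinset_univ]
  exact Fintype.sum_bijective _ rowOf_bijective _ _ (fun S => rfl)

lemma sum_pow_card (A : Finset β) :
    ∑ T ∈ A.powerset, (X : Polynomial ℤ) ^ T.card = (1 + X) ^ A.card := by
  have h := Finset.prod_add (fun _ : β => (X : Polynomial ℤ)) (fun _ => 1) A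
  simp only [prod_const, one_pow, mul_one] at h
  rw [add_comm]
  exact h.symm

lemma sum_single (A : Finset β) :
    ∑ T : Finset β, (if T ⊆ A ∧ T.Nonempty then (X : Polynomial ℤ) ^ T.card else 0) =
      (1 + X) ^ A.card - 1 := by
  have h1 : ∀ T : Finset β,
      (if T ⊆ A ∧ T.Nonempty then (X : Polynomial ℤ) ^ T.card else 0) =
      (if T ∈ A.powerset then (if T = ∅ then 0 else X ^ T.card) else 0) := by
    intro T
    by_cases hT : T ⊆ A
    · by_cases hne : T = ∅
      · simp [hT, hne]
      · simp [hT, hne, Finset.nonempty_iff_ne_empty]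
    · simp [hT]
  rw [Finset.sum_congr rfl (fun T _ => h1 T)]
  rw [Finset.sum_ite_mem, univ_inter]
  have h2 : ∀ T ∈ A.powerset, (if T = ∅ then (0 : Polynomial ℤ) else X ^ T.card) =
      X ^ T.card - (if T = ∅ then X ^ T.card else 0) := by
    intro T _
    by_cases hne : T = ∅ <;> simp [hne]
  rw [Finset.sum_congr rfl h2, Finset.sum_sub_distrib, sum_pow_card,
    Finset.sum_ite_eq' A.powerset (∅ : Finset β) (fun T => (X : Polynomial ℤ) ^ T.card),
    if_pos (Finset.empty_mem_powerset A)]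
  simp

lemma prod_ite_forall {c : α → Prop} (x : α → Polynomial ℤ) :
    (if ∀ a, c a then ∏ a, x a else 0) = ∏ a, (if c a then x a else 0) := by
  by_cases h : ∀ a, c a
  · rw [if_pos h]
    exact Finset.prod_congr rfl fun a _ => (if_pos (h a)).symm
  · rw [if_neg h]
    push_neg at h
    obtain ⟨a, ha⟩ := h
    exact (Finset.prod_eq_zero (mem_univ a)
      (show (if c a then x a else 0) = 0 from if_neg ha)).symm

lemma key (A : Finset β) :
    ∑ S : Finset (α × β),
      (if (∀ a, ∃ b ∈ A, (a, b) ∈ S) ∧ (∀ p ∈ S, p.2 ∈ A) then (X : Polynomial ℤ) ^ S.card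
       else 0) =
      ((1 + X) ^ A.card - 1) ^ Fintype.card α := by
  have hcond : ∀ S : Finset (α × β),
      ((∀ a, ∃ b ∈ A, (a, b) ∈ S) ∧ (∀ p ∈ S, p.2 ∈ A)) ↔
        ∀ a, rowOf S a ⊆ A ∧ (rowOf S a).Nonempty := by
    intro S
    constructor
    · rintro ⟨h1, h2⟩ a
      refine ⟨fun b hb => h2 _ (mem_rowOf.1 hb), ?_⟩
      obtain ⟨b, _, hb⟩ := h1 a
      exact ⟨b, mem_rowOf.2 hb⟩
    · intro h
      refine ⟨fun a => ?_, fun p hp => ?_⟩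
      · obtain ⟨b, hb⟩ := (h a).2
        exact ⟨b, (h a).1 hb, mem_rowOf.1 hb⟩
      · exact (h p.1).1 (mem_rowOf.2 (by simpa using hp))
  have hstep : ∀ S : Finset (α × β),
      (if (∀ a, ∃ b ∈ A, (a, b) ∈ S) ∧ (∀ p ∈ S, p.2 ∈ A) then (X : Polynomial ℤ) ^ S.card
       else 0) =
      ∏ a, (if rowOf S a ⊆ A ∧ (rowOf S a).Nonempty then (X : Polynomial ℤ) ^ (rowOf S a).card
            else 0) := by
    intro S
    by_cases h : (∀ a, ∃ b ∈ A, (a, b) ∈ S) ∧ (∀ p ∈ S, p.2 ∈ A)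
    · rw [if_pos h]
      have h' := (hcond S).1 h
      rw [← sum_card_rowOf S, ← Finset.prod_pow_eq_pow_sum]
      exact Finset.prod_congr rfl fun a _ => (if_pos (h' a)).symm
    · rw [if_neg h]
      have h' : ¬ ∀ a, rowOf S a ⊆ A ∧ (rowOf S a).Nonempty := fun hh => h ((hcond S).2 hh)
      obtain ⟨a, ha⟩ := not_forall.1 h'
      exact (Finset.prod_eq_zero (mem_univ a)
        (show (if rowOf S a ⊆ A ∧ (rowOf S a).Nonempty then (X : Polynomial ℤ) ^ (rowOf S a).card
          else 0) = 0 from if_neg ha)).symm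
  rw [Finset.sum_congr rfl (fun S _ => hstep S)]
  rw [sum_prod_rowOf (fun _ T => if T ⊆ A ∧ T.Nonempty then (X : Polynomial ℤ) ^ T.card else 0)]
  rw [Finset.prod_congr rfl (fun a _ => sum_single A), prod_const, card_univ]

lemma keySwap (A : Finset β) :
    ∑ S : Finset (β × α),
      (if (∀ a, ∃ b ∈ A, (b, a) ∈ S) ∧ (∀ p ∈ S, p.1 ∈ A) then (X : Polynomial ℤ) ^ S.card
       else 0) =
      ((1 + X) ^ A.card - 1) ^ Fintype.card α := by
  rw [← key (α := α) (β := β) A]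
  refine Fintype.sum_equiv (Equiv.prodComm β α).finsetCongr _ _ fun S => ?_
  have hmem : ∀ a b, (a, b) ∈ (Equiv.prodComm β α).finsetCongr S ↔ (b, a) ∈ S := by
    intro a b
    rw [Equiv.finsetCongr_apply, Finset.mem_map_equiv]
    rfl
  have hcard : ((Equiv.prodComm β α).finsetCongr S).card = S.card := by
    rw [Equiv.finsetCongr_apply, Finset.card_map]
  rw [hcard]
  refine if_congr ?_ rfl rfl
  constructor
  · rintro ⟨h1, h2⟩
    refine ⟨fun a => ?_, fun p hp => ?_⟩
    · obtain ⟨b, hbA, hb⟩ := h1 a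
      exact ⟨b, hbA, (hmem a b).2 hb⟩
    · have := h2 (p.2, p.1) ((hmem p.1 p.2).1 (by simpa using hp))
      simpa using this
  · rintro ⟨h1, h2⟩
    refine ⟨fun a => ?_, fun p hp => ?_⟩
    · obtain ⟨b, hbA, hb⟩ := h1 a
      exact ⟨b, hbA, (hmem a b).1 hb⟩
    · have := h2 (p.2, p.1) ((hmem p.2 p.1).2 (by simpa using hp))
      simpa using this

lemma subset_sum_neg_one (T : Finset α) :
    ∑ R ∈ (univ : Finset α).powerset, (if T ⊆ R then (-1 : Polynomial ℤ) ^ R.card else 0) =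
      if T = univ then (-1 : Polynomial ℤ) ^ Fintype.card α else 0 := by
  rw [Finset.sum_ite, Finset.sum_const_zero, add_zero]
  have hbij :
      ∑ R ∈ (univ : Finset α).powerset.filter (fun R => T ⊆ R), (-1 : Polynomial ℤ) ^ R.card =
      ∑ U ∈ Tᶜ.powerset, (-1 : Polynomial ℤ) ^ (T.card + U.card) := by
    refine Finset.sum_nbij' (i := fun R => R \ T) (j := fun U => T ∪ U) ?_ ?_ ?_ ?_ ?_
    · intro R hR
      rw [mem_powerset]
      intro x hx
      rw [mem_compl]
      exact (Finset.mem_sdiff.1 hx).2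
    · intro U hU
      rw [mem_filter, mem_powerset]
      exact ⟨subset_univ _, Finset.subset_union_left⟩
    · intro R hR
      rw [mem_filter] at hR
      exact Finset.union_sdiff_of_subset hR.2
    · intro U hU
      rw [mem_powerset] at hU
      apply Finset.union_sdiff_cancel_left
      exact Finset.disjoint_left.2 fun x hxT hxU => (Finset.mem_compl.1 (hU hxU)) hxT
    · intro R hR
      rw [mem_filter] at hR
      congr 1
      rw [add_comm, Finset.card_sdiff_add_card_eq_card hR.2]
  rw [hbij]
  have hsum : ∑ U ∈ Tᶜ.powerset, (-1 : Polynomial ℤ) ^ (T.card + U.card) =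
      (-1 : Polynomial ℤ) ^ T.card * ∑ U ∈ Tᶜ.powerset, (-1 : Polynomial ℤ) ^ U.card := by
    rw [Finset.mul_sum]
    exact Finset.sum_congr rfl fun U _ => by rw [pow_add]
  rw [hsum]
  have hcast : ∑ U ∈ Tᶜ.powerset, (-1 : Polynomial ℤ) ^ U.card =
      ((∑ U ∈ Tᶜ.powerset, (-1 : ℤ) ^ U.card : ℤ) : Polynomial ℤ) := by
    push_cast
    rfl
  rw [hcast, Finset.sum_powerset_neg_one_pow_card]
  by_cases hT : T = univ
  · rw [if_pos (by rw [hT, compl_univ]), if_pos hT]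
    simp [hT, card_univ]
  · rw [if_neg ?_, if_neg hT]
    · simp
    · intro h
      apply hT
      rwa [Finset.compl_eq_empty_iff] at h

end RookAux2

lemma isDomSet_iff (n m : ℕ) (S : Finset (Fin n × Fin m)) :
    IsDomSet n m S ↔ (∀ r, ∃ c, (r, c) ∈ S) ∨ (∀ c, ∃ r, (r, c) ∈ S) := by
  constructor
  · intro h
    by_cases h1 : ∀ r, ∃ c, (r, c) ∈ S
    · exact Or.inl h1
    · right
      push_neg at h1
      obtain ⟨r0, hr0⟩ := h1
      intro c
      rcases h (r0, c) with hv | ⟨u, hu, hne, hadj⟩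
      · exact absurd hv (hr0 c)
      · rcases hadj with h' | h'
        · exact absurd (show (r0, u.2) ∈ S from by
            have : (r0, u.2) = u := Prod.ext h'.symm rfl
            rwa [this]) (hr0 u.2)
        · refine ⟨u.1, ?_⟩
          have : (u.1, c) = u := Prod.ext rfl h'.symm
          rwa [this]
  · rintro (h | h) v
    · obtain ⟨c, hc⟩ := h v.1
      by_cases he : (v.1, c) = v
      · left; rwa [he] at hc
      · exact Or.inr ⟨(v.1, c), hc, he, Or.inl rfl⟩
    · obtain ⟨r, hr⟩ := h v.2
      by_cases he : (r, v.2) = v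
      · left; rwa [he] at hr
      · exact Or.inr ⟨(r, v.2), hr, he, Or.inr rfl⟩

lemma domPoly_eq_sum (n m : ℕ) :
    domPoly n m =
      ∑ S : Finset (Fin n × Fin m),
        (if IsDomSet n m S then (X : Polynomial ℤ) ^ S.card else 0) := by
  rw [domPoly]
  rw [show (∑ S : Finset (Fin n × Fin m),
      (if IsDomSet n m S then (X : Polynomial ℤ) ^ S.card else 0)) =
      ∑ S ∈ univ.filter (fun S : Finset (Fin n × Fin m) => IsDomSet n m S), X ^ S.card from
    (Finset.sum_filter _ _).symm]
  rw [← Finset.sum_fiberwise_of_maps_to (g := fun S : Finset (Fin n × Fin m) => S.card)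
    (t := Finset.range (n * m + 1)) (fun S _ => by
      rw [Finset.mem_range, Nat.lt_succ_iff]
      calc S.card ≤ Fintype.card (Fin n × Fin m) := Finset.card_le_univ S
        _ = n * m := by simp)]
  refine Finset.sum_congr rfl fun k _ => ?_
  have hfilter : (univ.filter (fun S : Finset (Fin n × Fin m) => IsDomSet n m S)).filter
      (fun S => S.card = k) =
      univ.filter (fun S : Finset (Fin n × Fin m) => S.card = k ∧ IsDomSet n m S) := by
    ext S
    simp [and_comm]
  rw [hfilter]
  have hcount : (domCount n m k : ℤ) =
      ((univ.filter (fun S : Finset (Fin n × Fin m) => S.card = k ∧ IsDomSet n m S)).card : ℤ) := by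
    congr 1
    rw [domCount, ← Set.ncard_coe_finset]
    congr 1
    ext S
    simp
  rw [hcount]
  have hconst : ∑ S ∈ univ.filter
        (fun S : Finset (Fin n × Fin m) => S.card = k ∧ IsDomSet n m S),
        (X : Polynomial ℤ) ^ S.card =
      ∑ _S ∈ univ.filter (fun S : Finset (Fin n × Fin m) => S.card = k ∧ IsDomSet n m S),
        (X : Polynomial ℤ) ^ k := by
    refine Finset.sum_congr rfl fun S hS => ?_
    rw [(Finset.mem_filter.1 hS).2.1]
  rw [hconst, Finset.sum_const, nsmul_eq_mul]
  simp

lemma Epoly (n m : ℕ) :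
    (-1 : Polynomial ℤ) ^ n *
        ∑ l ∈ Finset.range (n + 1),
          (-1 : Polynomial ℤ) ^ l * Polynomial.C (n.choose l : ℤ) * ((1 + X) ^ l - 1) ^ m =
      ∑ S : Finset (Fin n × Fin m),
        (if (∀ r, ∃ c, (r, c) ∈ S) ∧ (∀ c, ∃ r, (r, c) ∈ S) then (X : Polynomial ℤ) ^ S.card
         else 0) := by
  have h1 : ∑ R ∈ (univ : Finset (Fin n)).powerset,
      ((-1 : Polynomial ℤ) ^ R.card * ((1 + X) ^ R.card - 1) ^ m) =
      ∑ l ∈ Finset.range (n + 1),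
        (-1 : Polynomial ℤ) ^ l * Polynomial.C (n.choose l : ℤ) * ((1 + X) ^ l - 1) ^ m := by
    rw [Finset.sum_powerset_apply_card
      (fun l => (-1 : Polynomial ℤ) ^ l * ((1 + X) ^ l - 1) ^ m)]
    rw [show ((univ : Finset (Fin n)).card) = n by simp]
    refine Finset.sum_congr rfl fun l _ => ?_
    rw [nsmul_eq_mul]
    have hC : Polynomial.C ((n.choose l : ℤ)) = ((n.choose l : ℕ) : Polynomial ℤ) := by
      push_cast
      rfl
    rw [hC]
    ring
  have h2 : ∀ R : Finset (Fin n), ((1 + X : Polynomial ℤ) ^ R.card - 1) ^ m =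
      ∑ S : Finset (Fin n × Fin m),
        (if (∀ c : Fin m, ∃ r ∈ R, (r, c) ∈ S) ∧ (∀ p ∈ S, p.1 ∈ R)
         then (X : Polynomial ℤ) ^ S.card else 0) := by
    intro R
    have := RookAux2.keySwap (α := Fin m) (β := Fin n) R
    rw [Fintype.card_fin] at this
    rw [← this]
    exact Finset.sum_congr rfl fun S _ => RookAux2.myIte_congr Iff.rfl
  have h3 : ∀ S : Finset (Fin n × Fin m),
      ∑ R ∈ (univ : Finset (Fin n)).powerset, (-1 : Polynomial ℤ) ^ n * ((-1) ^ R.card *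
        (if (∀ c : Fin m, ∃ r ∈ R, (r, c) ∈ S) ∧ (∀ p ∈ S, p.1 ∈ R)
         then (X : Polynomial ℤ) ^ S.card else 0)) =
      (if (∀ r, ∃ c, (r, c) ∈ S) ∧ (∀ c, ∃ r, (r, c) ∈ S) then (X : Polynomial ℤ) ^ S.card
       else 0) := by
    intro S
    set T := S.image Prod.fst with hT
    have hcond : ∀ R : Finset (Fin n),
        ((∀ c : Fin m, ∃ r ∈ R, (r, c) ∈ S) ∧ (∀ p ∈ S, p.1 ∈ R)) ↔
        ((∀ c, ∃ r, (r, c) ∈ S) ∧ T ⊆ R) := by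
      intro R
      constructor
      · rintro ⟨hA, hB⟩
        refine ⟨fun c => (hA c).imp (fun r hr => hr.2), fun x hx => ?_⟩
        obtain ⟨p, hp, rfl⟩ := Finset.mem_image.1 hx
        exact hB p hp
      · rintro ⟨hA, hB⟩
        refine ⟨fun c => ?_, fun p hp => hB (Finset.mem_image_of_mem Prod.fst hp)⟩
        obtain ⟨r, hr⟩ := hA c
        exact ⟨r, hB (Finset.mem_image_of_mem Prod.fst hr), hr⟩
    have hterm : ∀ R ∈ (univ : Finset (Fin n)).powerset,
        (-1 : Polynomial ℤ) ^ n * ((-1) ^ R.card *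
          (if (∀ c : Fin m, ∃ r ∈ R, (r, c) ∈ S) ∧ (∀ p ∈ S, p.1 ∈ R)
           then (X : Polynomial ℤ) ^ S.card else 0)) =
        ((-1 : Polynomial ℤ) ^ n *
            (if (∀ c, ∃ r, (r, c) ∈ S) then (X : Polynomial ℤ) ^ S.card else 0)) *
          (if T ⊆ R then (-1 : Polynomial ℤ) ^ R.card else 0) := by
      intro R _
      by_cases hA : ∀ c : Fin m, ∃ r, (r, c) ∈ S
      · by_cases hB : T ⊆ R
        · rw [RookAux2.myIf_pos ((hcond R).2 ⟨hA, hB⟩), RookAux2.myIf_pos hA,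
            RookAux2.myIf_pos hB]
          ring
        · rw [RookAux2.myIf_neg (fun hc => hB ((hcond R).1 hc).2), RookAux2.myIf_pos hA,
            RookAux2.myIf_neg hB]
          ring
      · rw [RookAux2.myIf_neg (fun hc => hA ((hcond R).1 hc).1), RookAux2.myIf_neg hA]
        ring
    rw [Finset.sum_congr rfl hterm, ← Finset.mul_sum, RookAux2.subset_sum_neg_one T]
    have hTuniv : T = univ ↔ ∀ r, ∃ c, (r, c) ∈ S := by
      rw [Finset.eq_univ_iff_forall]
      constructor
      · intro h r
        obtain ⟨p, hp, hp1⟩ := Finset.mem_image.1 (h r)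
        have hps : (p.1, p.2) ∈ S := by simpa using hp
        rw [hp1] at hps
        exact ⟨p.2, hps⟩
      · intro h r
        obtain ⟨c, hc⟩ := h r
        exact Finset.mem_image.2 ⟨(r, c), hc, rfl⟩
    have hone : (-1 : Polynomial ℤ) ^ n * (-1) ^ n = 1 := by
      rw [← mul_pow]
      norm_num
    rw [Fintype.card_fin]
    by_cases hP1 : ∀ r : Fin n, ∃ c, (r, c) ∈ S
    · by_cases hP2 : ∀ c : Fin m, ∃ r, (r, c) ∈ S
      · rw [RookAux2.myIf_pos hP2, RookAux2.myIf_pos (hTuniv.2 hP1),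
          RookAux2.myIf_pos (⟨hP1, hP2⟩ : (∀ r, ∃ c, (r, c) ∈ S) ∧ ∀ c, ∃ r, (r, c) ∈ S)]
        linear_combination X ^ S.card * hone
      · rw [RookAux2.myIf_neg hP2, RookAux2.myIf_pos (hTuniv.2 hP1),
          RookAux2.myIf_neg (fun hc => hP2 hc.2)]
        ring
    · rw [RookAux2.myIf_neg (fun h => hP1 (hTuniv.1 h)),
        RookAux2.myIf_neg (fun hc : (∀ r, ∃ c, (r, c) ∈ S) ∧ ∀ c, ∃ r, (r, c) ∈ S =>
          hP1 hc.1)]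
      ring
  rw [← h1, Finset.mul_sum]
  have h4 : ∀ R ∈ (univ : Finset (Fin n)).powerset,
      (-1 : Polynomial ℤ) ^ n * ((-1) ^ R.card * ((1 + X) ^ R.card - 1) ^ m) =
      ∑ S : Finset (Fin n × Fin m), (-1 : Polynomial ℤ) ^ n * ((-1) ^ R.card *
        (if (∀ c : Fin m, ∃ r ∈ R, (r, c) ∈ S) ∧ (∀ p ∈ S, p.1 ∈ R)
         then (X : Polynomial ℤ) ^ S.card else 0)) := by
    intro R _
    rw [h2 R, Finset.mul_sum, Finset.mul_sum]
  rw [Finset.sum_congr rfl h4, Finset.sum_comm]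
  exact Finset.sum_congr rfl fun S _ => h3 S

/-- Intermediate form (eq. (12) in the paper) of the domination polynomial. -/
theorem rook_domination_polynomial_form12 (n m : ℕ) (hn : 1 ≤ n) (hm : 1 ≤ m) :
    domPoly n m =
      ((1 + Polynomial.X) ^ n - 1) ^ m + ((1 + Polynomial.X) ^ m - 1) ^ n -
        (-1 : Polynomial ℤ) ^ n *
          ∑ l ∈ Finset.range (n + 1),
            (-1 : Polynomial ℤ) ^ l * Polynomial.C (n.choose l : ℤ) *
              ((1 + Polynomial.X) ^ l - 1) ^ m := by
  have hsplit : ∀ S : Finset (Fin n × Fin m),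
      (if IsDomSet n m S then (X : Polynomial ℤ) ^ S.card else 0) =
      (if (∀ r, ∃ c, (r, c) ∈ S) then (X : Polynomial ℤ) ^ S.card else 0) +
        (if (∀ c, ∃ r, (r, c) ∈ S) then (X : Polynomial ℤ) ^ S.card else 0) -
        (if (∀ r, ∃ c, (r, c) ∈ S) ∧ (∀ c, ∃ r, (r, c) ∈ S)
         then (X : Polynomial ℤ) ^ S.card else 0) := by
    intro S
    by_cases h1 : ∀ r, ∃ c, (r, c) ∈ S <;> by_cases h2 : ∀ c, ∃ r, (r, c) ∈ S <;>
      simp [isDomSet_iff, h1, h2]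
  rw [domPoly_eq_sum, Finset.sum_congr rfl fun S _ => hsplit S,
    Finset.sum_sub_distrib, Finset.sum_add_distrib]
  have e1 : ∑ S : Finset (Fin n × Fin m),
      (if (∀ r, ∃ c, (r, c) ∈ S) then (X : Polynomial ℤ) ^ S.card else 0) =
      ((1 + X) ^ m - 1) ^ n := by
    have h := RookAux2.key (α := Fin n) (β := Fin m) (univ : Finset (Fin m))
    rw [Fintype.card_fin, card_univ, Fintype.card_fin] at h
    rw [← h]
    refine Finset.sum_congr rfl fun S _ => ?_
    refine RookAux2.myIte_congr ?_
    simp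
  have e2 : ∑ S : Finset (Fin n × Fin m),
      (if (∀ c, ∃ r, (r, c) ∈ S) then (X : Polynomial ℤ) ^ S.card else 0) =
      ((1 + X) ^ n - 1) ^ m := by
    have h := RookAux2.keySwap (α := Fin m) (β := Fin n) (univ : Finset (Fin n))
    rw [Fintype.card_fin, card_univ, Fintype.card_fin] at h
    rw [← h]
    refine Finset.sum_congr rfl fun S _ => ?_
    refine RookAux2.myIte_congr ?_
    simp
  rw [e1, e2, ← Epoly n m]
  ring
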